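/- Let f̃ : ℝ² → ℝ² be a lift of a torus homeomorphism homotopic to the identity. If there exists v ∈ ℝ² ∖ {0} such that f̃ does not have bounded deviation from v, then the sequence (A_n) admits at least one good limit value: there exist a nonempty compact set A_∞ ⊆ ℝ² and a strictly increasing sequence (n_k) of integers with d_{n_k} → +∞ such that the Hausdorff distance between A_{n_k} and A_∞ tends to 0. -/

import Mathlib

open Metric Set Filter Topology

noncomputable section

abbrev E2 : Type := EuclideanSpace ℝ (Fin 2)

/-- The image in `ℝ²` of an integer vector. -/
def intVec (v : Fin 2 → ℤ) : E2 := WithLp.toLp 2 (fun i => (v i : ℝ))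

/-- `f` is a lift of a torus homeomorphism homotopic to the identity. -/
def IsLift (f : E2 → E2) : Prop :=
  ∀ (x : E2) (v : Fin 2 → ℤ), f (x + intVec v) = f x + intVec v

/-- Lift condition for a homeomorphism of the torus whose linear part is the
integer matrix `A`. -/
def IsLiftMat (f : E2 → E2) (A : Matrix (Fin 2) (Fin 2) ℤ) : Prop :=
  ∀ (x : E2) (v : Fin 2 → ℤ), f (x + intVec v) = f x + intVec (A.mulVec v)

/-- Lift condition for a homeomorphism homotopic to the Dehn twist with matrix
`[[1,k₀],[0,1]]`. -/
def IsDehnLift (f : E2 → E2) (k₀ : ℤ) : Prop :=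
  (∀ x : E2, f (x + intVec ![1, 0]) = f x + intVec ![1, 0]) ∧
  (∀ x : E2, f (x + intVec ![0, 1]) = f x + intVec ![k₀, 1])

/-- The fundamental domain `D = [0,1] × [0,1]`. -/
def Dom : Set E2 := {x | x 0 ∈ Icc (0:ℝ) 1 ∧ x 1 ∈ Icc (0:ℝ) 1}

/-- `d_n`, the diameter of `f̃ⁿ(D)`. -/
def dn (f : E2 → E2) (n : ℕ) : ℝ := Metric.diam (f^[n] '' Dom)

/-- `A_n = d_n⁻¹ • (f̃ⁿ(D) − f̃ⁿ(x₀))`. -/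
def An (f : E2 → E2) (x₀ : E2) (n : ℕ) : Set E2 :=
  (fun y => (dn f n)⁻¹ • (y - f^[n] x₀)) '' (f^[n] '' Dom)

/-- A good limit value of the sequence `(A_n)`: a compact set which is the
Hausdorff limit of a subsequence `(A_{n_k})` with `d_{n_k} → +∞`. -/
def IsGoodLimit (f : E2 → E2) (x₀ : E2) (A : Set E2) : Prop :=
  IsCompact A ∧ ∃ nk : ℕ → ℕ, StrictMono nk ∧
    Tendsto (fun k => dn f (nk k)) atTop atTop ∧
    Tendsto (fun k => Metric.hausdorffDist (An f x₀ (nk k)) A) atTop (nhds 0)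

/-- A vector of irrational slope: nonzero and not a real multiple of a nonzero
integer vector. -/
def IrrationalSlope (u : E2) : Prop :=
  u ≠ 0 ∧ ¬∃ (t : ℝ) (w : Fin 2 → ℤ), w ≠ 0 ∧ u = t • intVec w

/-- `f` has bounded deviation from direction `v`. -/
def BoundedDeviation (f : E2 → E2) (v : E2) : Prop :=
  ∃ (ρ : E2) (M : ℝ), 0 ≤ M ∧
    ∀ (x : E2) (n : ℕ), |(inner ℝ (f^[n] x - x - (n : ℝ) • ρ) v : ℝ)| ≤ M

/-- The rotation set of `f`. -/
def rotSet (f : E2 → E2) : Set E2 :=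
  {w | ∃ (y : ℕ → E2) (m : ℕ → ℕ), Tendsto m atTop atTop ∧
    Tendsto (fun k => (m k : ℝ)⁻¹ • (f^[m k] (y k) - y k)) atTop (nhds w)}

/-- The line `ℝ•u` through the origin. -/
def lineThrough (u : E2) : Set E2 := {x | ∃ t : ℝ, x = t • u}



theorem quasi_add (a : ℕ → ℝ) (c : ℝ) (hc : 0 ≤ c)
    (h : ∀ m n, |a (m + n) - a m - a n| ≤ c) :
    ∃ L : ℝ, ∀ n : ℕ, |a n - n * L| ≤ c := by
  have hmul : ∀ (n m : ℕ), |a ((m + 1) * n) - ((m : ℝ) + 1) * a n| ≤ m * c := by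
    intro n m
    induction m with
    | zero => simp
    | succ m ih =>
      have hidx : (m + 1 + 1) * n = (m + 1) * n + n := by ring
      have h2 := h ((m + 1) * n) n
      have hZ : a ((m + 1 + 1) * n) - (((m + 1 : ℕ) : ℝ) + 1) * a n =
          (a ((m + 1) * n + n) - a ((m + 1) * n) - a n) +
            (a ((m + 1) * n) - ((m : ℝ) + 1) * a n) := by
        rw [hidx]; push_cast; ring
      rw [hZ]
      calc |_ + _| ≤ _ := abs_add_le _ _
        _ ≤ c + m * c := add_le_add h2 ih
        _ = ((m + 1 : ℕ) : ℝ) * c := by push_cast; ring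
  set b : ℕ → ℝ := fun n => a (n + 1) / (n + 1) with hb
  have hkey : ∀ n m : ℕ,
      |b n - a ((m + 1) * (n + 1)) / (((m : ℝ) + 1) * ((n : ℝ) + 1))| ≤ c / ((n : ℝ) + 1) := by
    intro n m
    have hn1 : (0:ℝ) < (n:ℝ) + 1 := by positivity
    have hm1 : (0:ℝ) < (m:ℝ) + 1 := by positivity
    have habs : |((m : ℝ) + 1) * a (n + 1) - a ((m + 1) * (n + 1))| ≤ m * c := by
      rw [abs_sub_comm]; exact hmul (n + 1) m
    have heq : b n - a ((m + 1) * (n + 1)) / (((m:ℝ) + 1) * ((n:ℝ) + 1)) =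
        (((m:ℝ) + 1) * a (n + 1) - a ((m + 1) * (n + 1))) / (((m:ℝ) + 1) * ((n:ℝ) + 1)) := by
      rw [hb]; field_simp
    rw [heq, abs_div, abs_of_pos (show (0:ℝ) < ((m:ℝ) + 1) * ((n:ℝ) + 1) by positivity)]
    calc |((m : ℝ) + 1) * a (n + 1) - a ((m + 1) * (n + 1))| / (((m:ℝ) + 1) * ((n:ℝ) + 1))
        ≤ ((m:ℝ) * c) / (((m:ℝ) + 1) * ((n:ℝ) + 1)) := by
          apply div_le_div_of_nonneg_right habs (by positivity)
      _ ≤ c / ((n : ℝ) + 1) := by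
          rw [div_le_div_iff₀ (by positivity) hn1]
          nlinarith [mul_nonneg hc hn1.le]
  have hdist : ∀ n m : ℕ, |b n - b m| ≤ c / ((n:ℝ) + 1) + c / ((m:ℝ) + 1) := by
    intro n m
    set t : ℝ := a ((n + 1) * (m + 1)) / (((n:ℝ) + 1) * ((m:ℝ) + 1)) with ht
    have h1 : |b n - t| ≤ c / ((n:ℝ) + 1) := by
      have := hkey n m
      rw [Nat.mul_comm (m + 1) (n + 1), mul_comm ((m:ℝ) + 1)] at this
      exact this
    have h2 : |t - b m| ≤ c / ((m:ℝ) + 1) := by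
      have := hkey m n
      rw [Nat.mul_comm (n + 1) (m + 1), mul_comm ((n:ℝ) + 1), abs_sub_comm] at this
      rw [ht, Nat.mul_comm (n + 1) (m + 1), mul_comm ((n:ℝ) + 1)]
      exact this
    calc |b n - b m| ≤ |b n - t| + |t - b m| := abs_sub_le _ _ _
      _ ≤ _ := add_le_add h1 h2
  have hcauchy : CauchySeq b := by
    apply cauchySeq_of_le_tendsto_0 (fun N : ℕ => 2 * c / (N + 1))
    · intro n m N hn hm
      rw [Real.dist_eq]
      have hmn : c / ((n:ℝ) + 1) ≤ c / ((N:ℝ) + 1) :=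
        div_le_div_of_nonneg_left hc (by positivity) (by exact_mod_cast Nat.succ_le_succ hn)
      have hmm : c / ((m:ℝ) + 1) ≤ c / ((N:ℝ) + 1) :=
        div_le_div_of_nonneg_left hc (by positivity) (by exact_mod_cast Nat.succ_le_succ hm)
      calc |b n - b m| ≤ c / ((n:ℝ) + 1) + c / ((m:ℝ) + 1) := hdist n m
        _ ≤ c / ((N:ℝ) + 1) + c / ((N:ℝ) + 1) := add_le_add hmn hmm
        _ = 2 * c / ((N:ℝ) + 1) := by ring
    · have ht : Tendsto (fun N : ℕ => ((N:ℝ) + 1)) atTop atTop :=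
        tendsto_atTop_add_const_right _ 1 tendsto_natCast_atTop_atTop
      simpa [div_eq_mul_inv] using ht.inv_tendsto_atTop.const_mul (2 * c)
  obtain ⟨L, hL⟩ := cauchySeq_tendsto_of_complete hcauchy
  have hbL : ∀ n : ℕ, |b n - L| ≤ c / ((n:ℝ) + 1) := by
    intro n
    have hsub : Tendsto (fun m : ℕ => (m + 1) * (n + 1) - 1) atTop atTop := by
      apply tendsto_atTop_mono _ tendsto_id
      intro m
      have := Nat.le_mul_of_pos_right (m + 1) (show 0 < n + 1 by omega)
      simp only [id_eq]
      omega
    have hgg : ∀ m : ℕ, b ((m + 1) * (n + 1) - 1) =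
        a ((m + 1) * (n + 1)) / (((m:ℝ) + 1) * ((n:ℝ) + 1)) := by
      intro m
      have hk : (m + 1) * (n + 1) - 1 + 1 = (m + 1) * (n + 1) := by
        have h1 : 0 < (m + 1) * (n + 1) := Nat.mul_pos (by omega) (by omega)
        omega
      simp only [hb]
      rw [hk]
      congr 1
      rw [← Nat.cast_add_one, hk]
      push_cast; ring
    have hg' : Tendsto (fun m : ℕ => a ((m + 1) * (n + 1)) / (((m:ℝ) + 1) * ((n:ℝ) + 1)))
        atTop (𝓝 L) := by
      have := hL.comp hsub
      simpa only [Function.comp_def, hgg] using this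
    have htend : Tendsto
        (fun m : ℕ => |b n - a ((m + 1) * (n + 1)) / (((m:ℝ) + 1) * ((n:ℝ) + 1))|)
        atTop (𝓝 |b n - L|) := (tendsto_const_nhds.sub hg').abs
    exact le_of_tendsto htend (Eventually.of_forall fun m => hkey n m)
  refine ⟨L, fun n => ?_⟩
  match n with
  | 0 =>
    have := h 0 0
    simp only [Nat.add_zero] at this
    simp only [Nat.cast_zero, zero_mul, sub_zero]
    calc |a 0| = |a 0 - a 0 - a 0| := by rw [abs_sub_comm]; congr 1; ring
      _ ≤ c := this
  | Nat.succ n =>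
    have h1 := hbL n
    have hn1 : (0:ℝ) < (n:ℝ) + 1 := by positivity
    have heq : a (n + 1) - (((n + 1 : ℕ)) : ℝ) * L = ((n:ℝ) + 1) * (b n - L) := by
      simp only [hb]; push_cast; field_simp
    rw [heq, abs_mul, abs_of_pos hn1]
    calc ((n:ℝ) + 1) * |b n - L| ≤ ((n:ℝ) + 1) * (c / ((n:ℝ) + 1)) :=
          mul_le_mul_of_nonneg_left h1 hn1.le
      _ = c := by field_simp

section Helpers

lemma isLift_iterate {f : E2 → E2} (hf : IsLift f) (n : ℕ) : IsLift f^[n] := by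
  induction n with
  | zero => intro x v; simp
  | succ n ih =>
    intro x v
    rw [Function.iterate_succ_apply', Function.iterate_succ_apply', ih x v, hf]

lemma norm_le_two_of_mem_Dom {x : E2} (hx : x ∈ Dom) : ‖x‖ ≤ 2 := by
  obtain ⟨h0, h1⟩ := hx
  rw [EuclideanSpace.norm_eq]
  have : ∑ i : Fin 2, ‖x i‖ ^ 2 = ‖x 0‖ ^ 2 + ‖x 1‖ ^ 2 := Fin.sum_univ_two _
  rw [this]
  have e0 : ‖x 0‖ ≤ 1 := by rw [Real.norm_eq_abs, abs_le]; constructor <;> linarith [h0.1, h0.2]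
  have e1 : ‖x 1‖ ≤ 1 := by rw [Real.norm_eq_abs, abs_le]; constructor <;> linarith [h1.1, h1.2]
  have : ‖x 0‖ ^ 2 + ‖x 1‖ ^ 2 ≤ 4 := by nlinarith [norm_nonneg (x 0), norm_nonneg (x 1)]
  calc Real.sqrt (‖x 0‖ ^ 2 + ‖x 1‖ ^ 2) ≤ Real.sqrt 4 := Real.sqrt_le_sqrt this
    _ = 2 := by rw [show (4:ℝ) = 2 ^ 2 by norm_num, Real.sqrt_sq (by norm_num)]

lemma exists_frac (x : E2) : ∃ x' ∈ Dom, ∃ w : Fin 2 → ℤ, x = x' + intVec w := by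
  refine ⟨x - intVec (fun i => ⌊x i⌋), ⟨?_, ?_⟩, fun i => ⌊x i⌋, by abel⟩ <;>
  · simp only [PiLp.sub_apply, intVec]
    constructor
    · exact sub_nonneg.2 (Int.floor_le _)
    · linarith [Int.sub_one_lt_floor (x 0), Int.sub_one_lt_floor (x 1)]

lemma isCompact_Dom : IsCompact Dom := by
  have hclosed : IsClosed Dom := by
    have h0 : Continuous fun x : E2 => x 0 := (EuclideanSpace.proj (0 : Fin 2)).continuous
    have h1 : Continuous fun x : E2 => x 1 := (EuclideanSpace.proj (1 : Fin 2)).continuous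
    have : Dom = (fun x : E2 => x 0) ⁻¹' Icc 0 1 ∩ (fun x : E2 => x 1) ⁻¹' Icc 0 1 := rfl
    rw [this]
    exact (isClosed_Icc.preimage h0).inter (isClosed_Icc.preimage h1)
  exact Metric.isCompact_of_isClosed_isBounded hclosed
    (isBounded_closedBall.subset fun x hx =>
      mem_closedBall_zero_iff.2 (norm_le_two_of_mem_Dom hx))

end Helpers

section Helpers2

lemma key_bound {f : E2 → E2} (hf : IsLift f) (hcont : Continuous f) {C : ℝ}
    (hC : ∀ n, dn f n ≤ C) {x₀ : E2} (hx₀ : x₀ ∈ Dom) (x : E2) (n : ℕ) :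
    ‖(f^[n] x - x) - (f^[n] x₀ - x₀)‖ ≤ C + 4 := by
  obtain ⟨x', hx', w, rfl⟩ := exists_frac x
  rw [isLift_iterate hf n x' w]
  have heq : (f^[n] x' + intVec w - (x' + intVec w)) - (f^[n] x₀ - x₀)
      = (f^[n] x' - f^[n] x₀) - (x' - x₀) := by abel
  rw [heq]
  have h1 : ‖f^[n] x' - f^[n] x₀‖ ≤ C := by
    have hb : Bornology.IsBounded (f^[n] '' Dom) :=
      (isCompact_Dom.image (hcont.iterate n)).isBounded
    have hd := dist_le_diam_of_mem hb (mem_image_of_mem _ hx') (mem_image_of_mem _ hx₀)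
    rw [dist_eq_norm] at hd
    exact hd.trans (hC n)
  have h2 : ‖x' - x₀‖ ≤ 4 :=
    calc ‖x' - x₀‖ ≤ ‖x'‖ + ‖x₀‖ := norm_sub_le _ _
      _ ≤ 4 := by linarith [norm_le_two_of_mem_Dom hx', norm_le_two_of_mem_Dom hx₀]
  calc ‖(f^[n] x' - f^[n] x₀) - (x' - x₀)‖ ≤ ‖f^[n] x' - f^[n] x₀‖ + ‖x' - x₀‖ :=
        norm_sub_le _ _
    _ ≤ C + 4 := by linarith

lemma boundedDeviation_of_dn_le {f : E2 → E2} (hf : IsLift f) (hcont : Continuous f)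
    {x₀ : E2} (hx₀ : x₀ ∈ Dom) {C : ℝ} (hC : ∀ n, dn f n ≤ C) (hC0 : 0 ≤ C)
    (v : E2) (hv : v ≠ 0) : BoundedDeviation f v := by
  set c := (C + 4) * ‖v‖ with hcdef
  have hc : 0 ≤ c := mul_nonneg (by linarith) (norm_nonneg v)
  set a : ℕ → ℝ := fun n => inner ℝ (f^[n] x₀ - x₀) v with ha
  have hbound : ∀ (x : E2) (n : ℕ), |(inner ℝ (f^[n] x - x) v : ℝ) - a n| ≤ c := by
    intro x n
    have h1 : (inner ℝ (f^[n] x - x) v : ℝ) - a n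
        = inner ℝ ((f^[n] x - x) - (f^[n] x₀ - x₀)) v := by
      simp only [ha, inner_sub_left]
    rw [h1]
    calc |(inner ℝ ((f^[n] x - x) - (f^[n] x₀ - x₀)) v : ℝ)|
        ≤ ‖(f^[n] x - x) - (f^[n] x₀ - x₀)‖ * ‖v‖ := abs_real_inner_le_norm _ _
      _ ≤ (C + 4) * ‖v‖ :=
          mul_le_mul_of_nonneg_right (key_bound hf hcont hC hx₀ x n) (norm_nonneg v)
  have hq : ∀ m n, |a (m + n) - a m - a n| ≤ c := by
    intro m n
    have he : a (m + n) - a n = inner ℝ (f^[m] (f^[n] x₀) - f^[n] x₀) v := by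
      rw [ha]
      simp only
      rw [← inner_sub_left]
      congr 1
      rw [Function.iterate_add_apply]
      abel
    have hb := hbound (f^[n] x₀) m
    calc |a (m + n) - a m - a n|
        = |(inner ℝ (f^[m] (f^[n] x₀) - f^[n] x₀) v : ℝ) - a m| := by
          rw [← he]; congr 1; ring
      _ ≤ c := hb
  obtain ⟨L, hL⟩ := quasi_add a c hc hq
  refine ⟨(L / ‖v‖ ^ 2) • v, 2 * c, by positivity, ?_⟩
  intro x n
  have hvn : ‖v‖ ≠ 0 := norm_ne_zero_iff.2 hv
  have hρ : (inner ℝ ((n:ℝ) • ((L / ‖v‖ ^ 2) • v)) v : ℝ) = n * L := by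
    rw [real_inner_smul_left, real_inner_smul_left, real_inner_self_eq_norm_sq]
    field_simp
  have hsplit : (inner ℝ (f^[n] x - x - (n:ℝ) • ((L / ‖v‖ ^ 2) • v)) v : ℝ)
      = ((inner ℝ (f^[n] x - x) v : ℝ) - a n) + (a n - n * L) := by
    rw [inner_sub_left, hρ]; ring
  rw [hsplit]
  calc |((inner ℝ (f^[n] x - x) v : ℝ) - a n) + (a n - n * L)|
      ≤ |(inner ℝ (f^[n] x - x) v : ℝ) - a n| + |a n - n * L| := abs_add_le _ _
    _ ≤ c + c := add_le_add (hbound x n) (hL n)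
    _ = 2 * c := by ring

end Helpers2

section Helpers3

lemma dn_nonneg (f : E2 → E2) (n : ℕ) : 0 ≤ dn f n := Metric.diam_nonneg

lemma zero_mem_An {f : E2 → E2} {x₀ : E2} (hx₀ : x₀ ∈ Dom) (n : ℕ) :
    (0 : E2) ∈ An f x₀ n := by
  refine ⟨f^[n] x₀, mem_image_of_mem _ hx₀, ?_⟩
  simp

lemma An_subset_ball {f : E2 → E2} (hcont : Continuous f) {x₀ : E2} (hx₀ : x₀ ∈ Dom) (n : ℕ) :
    An f x₀ n ⊆ closedBall (0 : E2) 1 := by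
  rintro z ⟨y, ⟨u, hu, rfl⟩, rfl⟩
  rw [mem_closedBall_zero_iff, norm_smul, Real.norm_eq_abs]
  by_cases hd : dn f n = 0
  · simp [hd]
  · have hd0 : (0:ℝ) < dn f n := lt_of_le_of_ne (dn_nonneg f n) (Ne.symm hd)
    have hb : Bornology.IsBounded (f^[n] '' Dom) :=
      (isCompact_Dom.image (hcont.iterate n)).isBounded
    have hnorm : ‖f^[n] u - f^[n] x₀‖ ≤ dn f n := by
      rw [← dist_eq_norm]
      exact dist_le_diam_of_mem hb (mem_image_of_mem _ hu) (mem_image_of_mem _ hx₀)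
    rw [abs_of_nonneg (inv_nonneg.2 hd0.le)]
    calc (dn f n)⁻¹ * ‖f^[n] u - f^[n] x₀‖ ≤ (dn f n)⁻¹ * dn f n :=
          mul_le_mul_of_nonneg_left hnorm (inv_nonneg.2 hd0.le)
      _ = 1 := inv_mul_cancel₀ hd

lemma isCompact_An {f : E2 → E2} (hcont : Continuous f) (x₀ : E2) (n : ℕ) :
    IsCompact (An f x₀ n) :=
  ((isCompact_Dom.image (hcont.iterate n)).image
    (by fun_prop))

end Helpers3

/-- If `f` has unbounded deviation in some direction, then the sequence `(A_n)`
admits at least one (nonempty) good limit value. -/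
theorem exists_good_limit_of_unbounded_deviation (f : E2 ≃ₜ E2) (hf : IsLift ⇑f)
    (x₀ : E2) (hx₀ : x₀ ∈ Dom)
    (v : E2) (hv : v ≠ 0) (hdev : ¬ BoundedDeviation ⇑f v) :
    ∃ A : Set E2, A.Nonempty ∧ IsGoodLimit ⇑f x₀ A := by
  classical
  have hub : ∀ C : ℝ, ∃ n, C < dn (⇑f) n := by
    by_contra hcon
    push_neg at hcon
    obtain ⟨C, hC⟩ := hcon
    exact hdev (boundedDeviation_of_dn_le hf f.continuous hx₀
      (C := max C 0) (fun n => (hC n).trans (le_max_left _ _)) (le_max_right _ _) v hv)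
  have H : ∀ N k : ℕ, ∃ n, N ≤ n ∧ (k:ℝ) < dn (⇑f) n := by
    intro N k
    obtain ⟨n, hn⟩ := hub ((k:ℝ) + ∑ i ∈ Finset.range N, dn (⇑f) i)
    have hsum : 0 ≤ ∑ i ∈ Finset.range N, dn (⇑f) i :=
      Finset.sum_nonneg fun i _ => dn_nonneg _ i
    have hk0 : (0:ℝ) ≤ k := Nat.cast_nonneg k
    refine ⟨n, ?_, by linarith⟩
    by_contra hlt
    push_neg at hlt
    have hle : dn (⇑f) n ≤ ∑ i ∈ Finset.range N, dn (⇑f) i :=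
      Finset.single_le_sum (fun i _ => dn_nonneg _ i) (Finset.mem_range.2 hlt)
    linarith
  choose F hF1 hF2 using H
  let nk : ℕ → ℕ := fun k => Nat.rec (F 0 0) (fun k ih => F (ih + 1) (k + 1)) k
  have hnkS : ∀ k, nk (k + 1) = F (nk k + 1) (k + 1) := fun k => rfl
  have hmono : StrictMono nk := strictMono_nat_of_lt_succ (by
    intro k
    have h1 := hF1 (nk k + 1) (k + 1)
    rw [hnkS k]
    omega)
  have hlow : ∀ k : ℕ, (k:ℝ) ≤ dn (⇑f) (nk k) := by
    intro k
    cases k with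
    | zero => show ((0:ℕ):ℝ) ≤ dn (⇑f) (F 0 0); simpa using (hF2 0 0).le
    | succ k =>
      rw [hnkS k]
      exact (hF2 (nk k + 1) (k + 1)).le
  have hdtop : Tendsto (fun k => dn (⇑f) (nk k)) atTop atTop :=
    tendsto_atTop_mono hlow tendsto_natCast_atTop_atTop
  -- compactness machinery
  set K : Set E2 := closedBall (0:E2) 1 with hK
  have hKco : IsCompact K := isCompact_closedBall _ _
  haveI : CompactSpace K := isCompact_iff_compactSpace.mp hKco
  have hsub : ∀ n, An (⇑f) x₀ n ⊆ K := fun n => An_subset_ball f.continuous hx₀ n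
  let B : ℕ → Set K := fun k => Subtype.val ⁻¹' (An (⇑f) x₀ (nk k))
  have hBimg : ∀ k, Subtype.val '' (B k) = An (⇑f) x₀ (nk k) := by
    intro k
    rw [Subtype.image_preimage_coe]
    exact inter_eq_self_of_subset_right (hsub _)
  have hBco : ∀ k, IsCompact (B k) := by
    intro k
    rw [Subtype.isCompact_iff, hBimg]
    exact isCompact_An f.continuous x₀ _
  have hBne : ∀ k, (B k).Nonempty :=
    fun k => ⟨⟨0, mem_closedBall_self zero_le_one⟩, zero_mem_An hx₀ _⟩
  let S : ℕ → TopologicalSpace.NonemptyCompacts K := fun k => ⟨⟨B k, hBco k⟩, hBne k⟩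
  obtain ⟨T, -, φ, hφ, hconv⟩ := isCompact_univ.tendsto_subseq (fun k => mem_univ (S k))
  refine ⟨Subtype.val '' (T : Set K), T.nonempty.image _,
    T.isCompact.image continuous_subtype_val, nk ∘ φ, hmono.comp hφ,
    hdtop.comp hφ.tendsto_atTop, ?_⟩
  have hdist : Tendsto (fun j => dist (S (φ j)) T) atTop (𝓝 0) :=
    tendsto_iff_dist_tendsto_zero.mp hconv
  have heq : (fun j => Metric.hausdorffDist (An (⇑f) x₀ ((nk ∘ φ) j)) (Subtype.val '' (T : Set K)))
      = fun j => dist (S (φ j)) T := by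
    funext j
    rw [Function.comp_apply, ← hBimg (φ j), Metric.hausdorffDist_image isometry_subtype_coe,
      Metric.NonemptyCompacts.dist_eq]
    rfl
  rw [heq]
  exact hdist
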